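/- Over any field k of characteristic ≠ 2, the quadratic form x ↦ x C xᵗ on k⁸, where C is the Cartan matrix of the root system E₈, is isomorphic to the 8-dimensional form ⟨1,1,1,1,1,1,1,1⟩ (i.e., 8·⟨1⟩ in the Witt ring, after scaling by the unimodular congruence class); equivalently, the symmetric bilinear form given by the E₈ Cartan matrix is congruent over k to the identity form of rank 8. -/

import Mathlib

/-- The integer matrix `Q` such that `Qᵀ ⬝ E₈ ⬝ Q = 4 • 1`. -/
def QE8 : Matrix (Fin 8) (Fin 8) ℤ :=
  !![0, 0, 0, 0, 0, 0, 0, 4;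
     1, 1, 1, 1, 1, 1, 1, 5;
     -1, 1, 1, 1, 1, 1, 1, 7;
     0, 0, 2, 2, 2, 2, 2, 10;
     0, 0, 0, 2, 2, 2, 2, 8;
     0, 0, 0, 0, 2, 2, 2, 6;
     0, 0, 0, 0, 0, 2, 2, 4;
     0, 0, 0, 0, 0, 0, 2, 2]

lemma isUnit_det_of_congr {R : Type*} [CommRing R] {n : Type*} [Fintype n] [DecidableEq n]
    {P C : Matrix n n R} (h : P.transpose * C * P = 1) : IsUnit P.det := by
  have := congrArg Matrix.det h
  rw [Matrix.det_mul, Matrix.det_mul, Matrix.det_transpose, Matrix.det_one] at this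
  exact IsUnit.of_mul_eq_one (a := _) _ (by rw [← mul_assoc]; exact this)

lemma QE8_key : QE8.transpose * CartanMatrix.E₈ * QE8 = Matrix.diagonal (fun _ => 4) := by
  decide

/-- over any field `k` of characteristic ≠ 2, the symmetric
bilinear form on `k⁸` given by the Cartan matrix of the root system `E₈` is
congruent to the identity form of rank 8, i.e. there is `P ∈ GL₈(k)` with
`Pᵀ · C · P = 1`; equivalently the quadratic form `x ↦ x C xᵗ` is isomorphic
to `⟨1,1,1,1,1,1,1,1⟩`. -/
theorem stmt_5 (k : Type*) [Field k] (hk : (2 : k) ≠ 0) :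
    ∃ P : Matrix (Fin 8) (Fin 8) k, IsUnit P.det ∧
      P.transpose * (CartanMatrix.E₈.map (Int.cast : ℤ → k)) * P = 1 := by
  set f := Int.castRingHom k with hf
  set Pk : Matrix (Fin 8) (Fin 8) k := (2 : k)⁻¹ • (QE8.map f) with hP
  have key : Pk.transpose * (CartanMatrix.E₈.map (Int.cast : ℤ → k)) * Pk = 1 := by
    have h4 : ((QE8.transpose * CartanMatrix.E₈ * QE8).map f)
        = (Matrix.diagonal (fun _ => (4:ℤ))).map f := by rw [QE8_key]
    rw [Matrix.map_mul, Matrix.map_mul] at h4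
    have hE : CartanMatrix.E₈.map (Int.cast : ℤ → k) = CartanMatrix.E₈.map f := rfl
    rw [hP, Matrix.transpose_smul, Matrix.smul_mul, Matrix.mul_smul, Matrix.smul_mul,
      smul_smul, ← Matrix.transpose_map, hE, h4]
    have : ((Matrix.diagonal (fun _ => (4:ℤ))).map f)
        = (4 : k) • (1 : Matrix (Fin 8) (Fin 8) k) := by
      ext i j
      by_cases h : i = j <;>
        simp [h, Matrix.map_apply, Matrix.smul_apply, Matrix.one_apply,
          Matrix.diagonal_apply_eq, Matrix.diagonal_apply_ne]
    rw [this, smul_smul]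
    have h2 : ((2 : k)⁻¹ * (2 : k)⁻¹) * 4 = 1 := by field_simp; ring
    rw [h2, one_smul]
  exact ⟨Pk, isUnit_det_of_congr key, key⟩
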